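/- Let Γ₀ ≤ Γ with [Γ : Γ₀] = ∞ and Comm_Γ^{(1)}(Γ₀) = Γ₀. Let Γ₀ ↷ A₀ be an action by automorphisms with coinduced group G = A₀^{(I)} ⋊ Γ, and set G₀ = A₀ ⋊ Γ₀ ≤ G (A₀ embedded at the trivial-coset coordinate). Then Comm_G^{(1)}(Γ₀) = Comm_{G₀}^{(1)}(Γ₀). -/

import Mathlib

/-- The restricted direct sum `⊕_{i ∈ I} A₀`. -/
def finSupp (I A₀ : Type*) [Group A₀] : Subgroup (I → A₀) where
  carrier := {x | (Function.mulSupport x).Finite}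
  one_mem' := by
    have : Function.mulSupport (1 : I → A₀) = ∅ := Function.mulSupport_one
    simp [Set.mem_setOf_eq, this]
  mul_mem' := by
    intro x y hx hy
    exact (Set.Finite.union hx hy).subset (Function.mulSupport_mul x y)
  inv_mem' := by
    intro x hx
    simpa [Function.mulSupport_inv] using hx

/-- Let `Γ₀ ≤ Γ` with `[Γ : Γ₀] = ∞` and `Comm_Γ^{(1)}(Γ₀) = Γ₀`.  Let `G = A₀^{(I)} ⋊ Γ`
be the coinduced group of an action `Γ₀ ↷ A₀` over `I = Γ ⧸ Γ₀`, and let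
`G₀ = A₀ ⋊ Γ₀ ≤ G`, where `A₀` is embedded at the trivial-coset coordinate, so that as a
subset of `G`, `G₀ = {(a, γ) : supp a ⊆ {Γ₀}, γ ∈ Γ₀}`.  Then
`Comm_G^{(1)}(Γ₀) = Comm_{G₀}^{(1)}(Γ₀)`, i.e. every element of `G` commensurating `Γ₀`
already lies in `G₀`.  Here `Γ₀` is regarded as the subgroup `Λ₀ = inr(Γ₀)` of `G`, and
commensuration of `Λ₀` by `g` means `[Λ₀ : gΛ₀g⁻¹ ∩ Λ₀] < ∞`. -/
theorem stmt5 {Γ A₀ : Type*} [Group Γ] [Group A₀] (Γ₀ : Subgroup Γ)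
    (hΓ₀ : Γ₀.index = 0)
    (hcommΓ : ∀ γ : Γ,
      (Subgroup.map (MulAut.conj γ).toMonoidHom Γ₀).relIndex Γ₀ ≠ 0 ↔ γ ∈ Γ₀)
    (σ : Γ →* MulAut (finSupp (Γ ⧸ Γ₀) A₀))
    (hσ : ∀ (g : Γ) (i : Γ ⧸ Γ₀), ∃ τ : MulAut A₀, ∀ x : finSupp (Γ ⧸ Γ₀) A₀,
      ((σ g x : (Γ ⧸ Γ₀) → A₀)) (g • i) = τ ((x : (Γ ⧸ Γ₀) → A₀) i)) :
    {g : finSupp (Γ ⧸ Γ₀) A₀ ⋊[σ] Γ |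
        (Subgroup.map (MulAut.conj g).toMonoidHom
            (Subgroup.map (SemidirectProduct.inr (φ := σ)) Γ₀)).relIndex
          (Subgroup.map (SemidirectProduct.inr (φ := σ)) Γ₀) ≠ 0}
      = {g : finSupp (Γ ⧸ Γ₀) A₀ ⋊[σ] Γ |
          (Function.mulSupport (g.left : (Γ ⧸ Γ₀) → A₀) ⊆ {QuotientGroup.mk (1 : Γ)}
              ∧ g.right ∈ Γ₀)
          ∧ (Subgroup.map (MulAut.conj g).toMonoidHom
                (Subgroup.map (SemidirectProduct.inr (φ := σ)) Γ₀)).relIndex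
              (Subgroup.map (SemidirectProduct.inr (φ := σ)) Γ₀) ≠ 0} := by
  ext g
  simp only [Set.mem_setOf_eq, and_iff_right_iff_imp]
  constructor
  · intro hP
    refine ⟨?_, hP⟩
    -- the pulled-back commensurated subgroup of Γ
    set H₁ : Subgroup Γ :=
      (Subgroup.map (MulAut.conj g).toMonoidHom
        (Subgroup.map (SemidirectProduct.inr (φ := σ)) Γ₀)).comap
        (SemidirectProduct.inr (φ := σ)) with hH₁
    have hP' : H₁.relIndex Γ₀ ≠ 0 := by
      rw [hH₁, Subgroup.relIndex_comap]; exact hP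
    have hmem : ∀ l : Γ, l ∈ H₁ →
        l ∈ Subgroup.map (MulAut.conj g.right).toMonoidHom Γ₀ ∧ σ l g.left = g.left := by
      intro l hl
      rw [hH₁, Subgroup.mem_comap, Subgroup.mem_map] at hl
      obtain ⟨x, hx, hconj⟩ := hl
      rw [Subgroup.mem_map] at hx
      obtain ⟨δ, hδ, rfl⟩ := hx
      simp only [MulEquiv.coe_toMonoidHom, MulAut.conj_apply] at hconj
      have heq : g * SemidirectProduct.inr δ = SemidirectProduct.inr l * g := by
        rw [← hconj]; group
      have hr : g.right * δ = l * g.right := by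
        have := congrArg SemidirectProduct.right heq
        simpa [SemidirectProduct.mul_right] using this
      have hlft : g.left = σ l g.left := by
        have := congrArg SemidirectProduct.left heq
        simpa [SemidirectProduct.mul_left] using this
      refine ⟨⟨δ, hδ, ?_⟩, hlft.symm⟩
      simp only [MulEquiv.coe_toMonoidHom, MulAut.conj_apply]
      rw [hr]; group
    -- g.right ∈ Γ₀
    have hγ : g.right ∈ Γ₀ := by
      have hle : H₁ ≤ Subgroup.map (MulAut.conj g.right).toMonoidHom Γ₀ :=
        fun l hl => (hmem l hl).1
      have hd := Subgroup.relIndex_dvd_of_le_left Γ₀ hle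
      exact (hcommΓ g.right).mp fun h0 => hP' (eq_zero_of_zero_dvd (h0 ▸ hd))
    refine ⟨?_, hγ⟩
    -- support condition
    intro i hi
    obtain ⟨j, rfl⟩ := QuotientGroup.mk_surjective i
    have hsuppfin : (Function.mulSupport (g.left : (Γ ⧸ Γ₀) → A₀)).Finite := g.left.2
    set N : Subgroup Γ := H₁ ⊓ Γ₀ with hN
    set K : Subgroup Γ := Subgroup.map (MulAut.conj j).toMonoidHom Γ₀ with hK
    have hKiff : ∀ x : Γ, x ∈ K ↔ j⁻¹ * x * j ∈ Γ₀ := by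
      intro x
      rw [hK, Subgroup.mem_map]
      constructor
      · rintro ⟨y, hy, rfl⟩
        simp only [MulEquiv.coe_toMonoidHom, MulAut.conj_apply]
        simpa [mul_assoc] using hy
      · intro h
        exact ⟨j⁻¹ * x * j, h, by
          simp only [MulEquiv.coe_toMonoidHom, MulAut.conj_apply]; group⟩
    have hNrel : N.relIndex Γ₀ ≠ 0 := by
      rw [hN, Subgroup.inf_relIndex_right]; exact hP'
    have hsupp : ∀ l : N, (l : Γ) • (QuotientGroup.mk j : Γ ⧸ Γ₀) ∈
        Function.mulSupport (g.left : (Γ ⧸ Γ₀) → A₀) := by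
      intro l
      have hl2 : (l : Γ) ∈ H₁ ⊓ Γ₀ := l.2
      have hfix := (hmem (l : Γ) (Subgroup.mem_inf.mp hl2).1).2
      obtain ⟨τ, hτ⟩ := hσ (l : Γ) (QuotientGroup.mk j)
      have hτ' := hτ g.left
      rw [hfix] at hτ'
      intro h
      rw [hτ'] at h
      exact hi ((MulEquiv.map_eq_one_iff τ).mp h)
    have hKN : K.relIndex N ≠ 0 := by
      let f : N ⧸ K.subgroupOf N →
          {x // x ∈ Function.mulSupport (g.left : (Γ ⧸ Γ₀) → A₀)} := fun q =>
        Quotient.liftOn' q (fun l => ⟨(l : Γ) • (QuotientGroup.mk j : Γ ⧸ Γ₀), hsupp l⟩)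
          (by
            intro a b hab
            rw [QuotientGroup.leftRel_apply] at hab
            have hab' : j⁻¹ * ((a : Γ)⁻¹ * (b : Γ)) * j ∈ Γ₀ := by
              have := hab
              rw [Subgroup.mem_subgroupOf] at this
              exact (hKiff _).mp (by simpa using this)
            apply Subtype.ext
            show (a : Γ) • (QuotientGroup.mk j : Γ ⧸ Γ₀) = (b : Γ) • (QuotientGroup.mk j)
            simp only [MulAction.Quotient.smul_mk, smul_eq_mul]
            rw [QuotientGroup.eq]
            convert hab' using 1
            group)
      have hinj : Function.Injective f := by
        intro q₁ q₂
        refine Quotient.inductionOn₂' q₁ q₂ ?_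
        intro a b h
        have h' : (a : Γ) • (QuotientGroup.mk j : Γ ⧸ Γ₀) = (b : Γ) • (QuotientGroup.mk j) :=
          congrArg Subtype.val h
        simp only [MulAction.Quotient.smul_mk, smul_eq_mul] at h'
        rw [QuotientGroup.eq] at h'
        apply Quotient.sound'
        rw [QuotientGroup.leftRel_apply, Subgroup.mem_subgroupOf]
        refine (hKiff _).mpr ?_
        convert h' using 1
        push_cast
        group
      haveI : Finite {x // x ∈ Function.mulSupport (g.left : (Γ ⧸ Γ₀) → A₀)} :=
        hsuppfin.to_subtype
      haveI : Finite (N ⧸ K.subgroupOf N) := Finite.of_injective f hinj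
      exact Subgroup.index_ne_zero_of_finite
    have hKΓ₀ : K.relIndex Γ₀ ≠ 0 := Subgroup.relIndex_ne_zero_trans hKN hNrel
    have hj : j ∈ Γ₀ := (hcommΓ j).mp hKΓ₀
    show QuotientGroup.mk j ∈ ({QuotientGroup.mk 1} : Set (Γ ⧸ Γ₀))
    rw [Set.mem_singleton_iff, QuotientGroup.eq]
    simpa using hj
  · intro h
    exact h.2
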